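/- arXiv:2211.12603 — 11 statements merged into one kernel-verified Lean document; each statement's English description precedes it below -/
import Mathlib

section
/- For a feed-forward CRN, a configuration D is reachable from configuration I if and only if D is reachable from I by an ordered application of rules, i.e., a sequence in which all applications of each rule occur contiguously, with rules appearing in the feed-forward order. -/
abbrev Config (Λ : Type*) := Λ → ℕ
abbrev Rule (Λ : Type*) := (Λ → ℕ) × (Λ → ℕ)

def Applicable {Λ : Type*} (R : Rule Λ) (C : Config Λ) : Prop := ∀ i, R.1 i ≤ C i

def applyRule {Λ : Type*} (R : Rule Λ) (C : Config Λ) : Config Λ :=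
  fun i => C i + R.2 i - R.1 i

/-- One step: apply some applicable rule of `Γ`. -/
def Step {Λ : Type*} (Γ : Set (Rule Λ)) (C C' : Config Λ) : Prop :=
  ∃ R ∈ Γ, Applicable R C ∧ C' = applyRule R C

/-- Reachability: reflexive-transitive closure of single rule applications. -/
def Reachable {Λ : Type*} (Γ : Set (Rule Λ)) : Config Λ → Config Λ → Prop :=
  Relation.ReflTransGen (Step Γ)

/-- A list of rules is a feed-forward ordering if products of any rule never occur
as reactants of earlier rules of the ordering. -/
def FFList {Λ : Type*} (l : List (Rule Λ)) : Prop :=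
  l.Pairwise (fun Re Rl => ∀ i, Rl.2 i > 0 → Re.1 i = 0)

/-- Ordered application along a list of rules: apply the first rule some number of times,
then the second rule some number of times, and so on. -/
def OrderedReach {Λ : Type*} : List (Rule Λ) → Config Λ → Config Λ → Prop
  | [], C, C' => C = C'
  | R :: rest, C, C' => ∃ M, Relation.ReflTransGen (Step {R}) C M ∧ OrderedReach rest M C'

/-- Swap lemma: an R-step after an S-step can be moved before it, when products of S
are never reactants of R. -/
lemma swap_step {Λ : Type*} {R S : Rule Λ} (hff : ∀ i, S.2 i > 0 → R.1 i = 0)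
    {C C' C'' : Config Λ} (hS : Applicable S C) (hC' : C' = applyRule S C)
    (hR : Applicable R C') (hC'' : C'' = applyRule R C') :
    Applicable R C ∧ Applicable S (applyRule R C) ∧ C'' = applyRule S (applyRule R C) := by
  subst hC' hC''
  have key : ∀ i, R.1 i = 0 ∨ S.2 i = 0 := by
    intro i
    rcases Nat.eq_zero_or_pos (S.2 i) with h | h
    · exact Or.inr h
    · exact Or.inl (hff i h)
  refine ⟨?_, ?_, ?_⟩
  · intro i
    have h1 := hS i
    have h2 := hR i
    simp only [applyRule] at h2 ⊢
    rcases key i with h | h <;> omega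
  · intro i
    have h1 := hS i
    have h2 := hR i
    simp only [applyRule] at h2 ⊢
    rcases key i with h | h <;> omega
  · funext i
    have h1 := hS i
    have h2 := hR i
    simp only [applyRule] at h2 ⊢
    rcases key i with h | h <;> omega

/-- Push a single Γrest-step past a block of R-steps. -/
lemma push_past_block {Λ : Type*} {R : Rule Λ} {Γ : Set (Rule Λ)}
    (hff : ∀ S ∈ Γ, ∀ i, S.2 i > 0 → R.1 i = 0)
    {I C M : Config Λ} (h1 : Step Γ I C)
    (h2 : Relation.ReflTransGen (Step {R}) C M) :
    ∃ M', Relation.ReflTransGen (Step {R}) I M' ∧ Step Γ M' M := by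
  induction h2 using Relation.ReflTransGen.head_induction_on generalizing I with
  | refl => exact ⟨I, Relation.ReflTransGen.refl, h1⟩
  | head hstep _ ih =>
    rename_i C C₂ _
    obtain ⟨R', hR', hRap, hRC⟩ := hstep
    rw [Set.mem_singleton_iff] at hR'; rw [hR'] at hRap hRC
    obtain ⟨S, hSΓ, hSap, hSC⟩ := h1
    obtain ⟨hRapI, hSapM, hC₂⟩ := swap_step (hff S hSΓ) hSap hSC hRap hRC
    obtain ⟨M', hM'1, hM'2⟩ := ih ⟨S, hSΓ, hSapM, hC₂⟩
    exact ⟨M', Relation.ReflTransGen.head ⟨R, rfl, hRapI, rfl⟩ hM'1, hM'2⟩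

/-- Extract all R-steps to the front. -/
lemma extract_head {Λ : Type*} {R : Rule Λ} {Γ : Set (Rule Λ)}
    (hff : ∀ S ∈ Γ, ∀ i, S.2 i > 0 → R.1 i = 0)
    {I D : Config Λ} (h : Relation.ReflTransGen (Step (insert R Γ)) I D) :
    ∃ M, Relation.ReflTransGen (Step {R}) I M ∧ Relation.ReflTransGen (Step Γ) M D := by
  induction h using Relation.ReflTransGen.head_induction_on with
  | refl => exact ⟨D, Relation.ReflTransGen.refl, Relation.ReflTransGen.refl⟩
  | head hstep _ ih =>
    rename_i I C _
    obtain ⟨M, hM1, hM2⟩ := ih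
    obtain ⟨R', hR', hRap, hRC⟩ := hstep
    rcases hR' with h | h
    · subst h
      exact ⟨M, Relation.ReflTransGen.head ⟨R', rfl, hRap, hRC⟩ hM1, hM2⟩
    · obtain ⟨M', hM'1, hM'2⟩ := push_past_block hff ⟨R', h, hRap, hRC⟩ hM1
      exact ⟨M', hM'1, Relation.ReflTransGen.head hM'2 hM2⟩

/-- in a feed-forward CRN, `D` is reachable from `I` iff it is reachable by
an ordered application of the rules in the feed-forward order. -/
theorem stmt1 {Λ : Type*} (l : List (Rule Λ)) (hff : FFList l) (hnd : l.Nodup)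
    (I D : Config Λ) :
    Reachable {R | R ∈ l} I D ↔ OrderedReach l I D := by
  clear hnd
  induction l generalizing I with
  | nil =>
    constructor
    · intro h
      induction h using Relation.ReflTransGen.head_induction_on with
      | refl => rfl
      | head hstep _ _ =>
        obtain ⟨R, hR, -⟩ := hstep
        simp at hR
    · rintro rfl; exact Relation.ReflTransGen.refl
  | cons R rest ih =>
    rw [FFList, List.pairwise_cons] at hff
    obtain ⟨hhead, htail⟩ := hff
    constructor
    · intro h
      have hset : {R' | R' ∈ R :: rest} = insert R {R' | R' ∈ rest} := by
        ext x; simp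
      rw [Reachable, hset] at h
      obtain ⟨M, hM1, hM2⟩ := extract_head (fun S hS => hhead S hS) h
      exact ⟨M, hM1, (ih htail M).mp hM2⟩
    · rintro ⟨M, hM1, hM2⟩
      have h1 : Reachable {R' | R' ∈ R :: rest} I M :=
        Relation.ReflTransGen.mono (fun a b ⟨R', hR', hap, hC⟩ =>
          ⟨R', by simp at hR'; simp [hR'], hap, hC⟩) _ _ hM1
      have h2 : Reachable {R' | R' ∈ R :: rest} M D :=
        Relation.ReflTransGen.mono (fun a b ⟨R', hR', hap, hC⟩ =>
          ⟨R', by simp at hR' ⊢; exact Or.inr hR', hap, hC⟩)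
          _ _ ((ih htail M).mpr hM2)
      exact h1.trans h2
end

section
/- If a configuration D is inconsistent with configuration I for a non-void leaf rule R ∈ Γ (i.e., there is no nonnegative integer x with D − x·(R_p − R_r) agreeing with I on all product species of R while R remains applicable appropriately), then D is not reachable from I under Γ. -/
/-- let `R ∈ Γ` be a non-void leaf rule (no product of `R` is a reactant
of any other rule of `Γ`, and — the key fact that counts of `R`'s product species can
only be changed by `R` itself — no other rule of `Γ` produces a product species of `R`).
If `D` is inconsistent with `I` for `R`, i.e. there is no nonnegative integer `x` with
`D - x·(R_p - R_r)` agreeing with `I` on all product species of `R`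
(stated additively as `D i + x·R_r i = I i + x·R_p i`), then `D` is not reachable
from `I` under `Γ`. -/
theorem stmt5 {Λ : Type*} (Γ : Set (Rule Λ)) (R : Rule Λ) (hR : R ∈ Γ)
    (hleaf : ∀ R' ∈ Γ, R' ≠ R → ∀ i, R.2 i > 0 → R'.1 i = 0)
    (honly : ∀ R' ∈ Γ, R' ≠ R → ∀ i, R.2 i > 0 → R'.2 i = 0)
    (hnonvoid : ∃ i, R.1 i < R.2 i)
    (I D : Config Λ)
    (hinc : ¬ ∃ x : ℕ, ∀ i, R.2 i ≠ 0 → D i + x * R.1 i = I i + x * R.2 i) :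
    ¬ Reachable Γ I D := by
  intro hreach
  apply hinc
  clear hinc
  induction hreach with
  | refl => exact ⟨0, fun i _ => by simp⟩
  | tail _ hstep ih =>
    obtain ⟨x, hx⟩ := ih
    obtain ⟨R', hR'Γ, happ, heq⟩ := hstep
    by_cases hRR : R' = R
    · subst hRR
      refine ⟨x + 1, fun i hi => ?_⟩
      have h1 := happ i
      subst heq
      unfold applyRule
      have h2 := hx i hi
      have e1 : (x + 1) * R'.1 i = x * R'.1 i + R'.1 i := by ring
      have e2 : (x + 1) * R'.2 i = x * R'.2 i + R'.2 i := by ring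
      omega
    · refine ⟨x, fun i hi => ?_⟩
      have h1 := hleaf R' hR'Γ hRR i (Nat.pos_of_ne_zero hi)
      have h2 := honly R' hR'Γ hRR i (Nat.pos_of_ne_zero hi)
      subst heq
      unfold applyRule
      have := hx i hi
      omega
end

section
/- Let Γ be a rule set, R ∈ Γ a non-void leaf rule, and suppose D is consistent with I for R, with pruned configuration D' = D − x·(R_p − R_r) for the unique witnessing nonnegative integer x. Then D is reachable from I under Γ if and only if D' is reachable from I under Γ \ {R}. -/
lemma reach_mono {Λ : Type*} {Γ Γ' : Set (Rule Λ)} (h : Γ ⊆ Γ') {C D : Config Λ}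
    (hr : Relation.ReflTransGen (Step Γ) C D) : Relation.ReflTransGen (Step Γ') C D := by
  refine Relation.ReflTransGen.mono ?_ _ _ hr
  rintro a b ⟨S, hS, hap, rfl⟩
  exact ⟨S, h hS, hap, rfl⟩

/-- shift lemma: a `Γ \ {R}` path from `C₁` can be replayed from `C` when
`C₁ + R.1 = C + R.2` pointwise. -/
lemma shift_path {Λ : Type*} (Γ : Set (Rule Λ)) (R : Rule Λ)
    (hleaf : ∀ R' ∈ Γ, R' ≠ R → ∀ i, R.2 i > 0 → R'.1 i = 0)
    {C₁ E : Config Λ} (hr : Relation.ReflTransGen (Step (Γ \ {R})) C₁ E) :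
    ∀ C : Config Λ, (∀ i, C₁ i + R.1 i = C i + R.2 i) →
      ∃ E', Relation.ReflTransGen (Step (Γ \ {R})) C E' ∧ ∀ i, E i + R.1 i = E' i + R.2 i := by
  induction hr using Relation.ReflTransGen.head_induction_on with
  | refl => exact fun C hC => ⟨C, Relation.ReflTransGen.refl, hC⟩
  | head hstep _ ih =>
    rename_i a b hb
    intro C hC
    obtain ⟨S, hS, hap, rfl⟩ := hstep
    have hSΓ : S ∈ Γ := hS.1
    have hSne : S ≠ R := fun h => hS.2 (by simp [h])
    have hapC : Applicable S C := by
      intro i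
      by_cases h2 : R.2 i > 0
      · rw [hleaf S hSΓ hSne i h2]; exact Nat.zero_le _
      · have := hC i; have := hap i; omega
    have hrel : ∀ i, applyRule S a i + R.1 i = applyRule S C i + R.2 i := by
      intro i
      have h1 := hC i
      have h2 := hap i
      have h3 := hapC i
      simp only [applyRule]
      omega
    obtain ⟨E', hE', hEr⟩ := ih (applyRule S C) hrel
    exact ⟨E', Relation.ReflTransGen.head ⟨S, hS, hapC, rfl⟩ hE', hEr⟩

/-- main extraction: any `Γ` path from `C` to `D` gives a `Γ \ {R}` path to some `E`
with `D + m·R.1 = E + m·R.2`. -/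
lemma extract {Λ : Type*} (Γ : Set (Rule Λ)) (R : Rule Λ)
    (hleaf : ∀ R' ∈ Γ, R' ≠ R → ∀ i, R.2 i > 0 → R'.1 i = 0)
    {C D : Config Λ} (hr : Relation.ReflTransGen (Step Γ) C D) :
    ∃ m : ℕ, ∃ E, Relation.ReflTransGen (Step (Γ \ {R})) C E ∧
      ∀ i, D i + m * R.1 i = E i + m * R.2 i := by
  induction hr using Relation.ReflTransGen.head_induction_on with
  | refl => exact ⟨0, D, Relation.ReflTransGen.refl, fun i => by simp⟩
  | head hstep _ ih =>
    rename_i a b hb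
    obtain ⟨m, E, hE, hrel⟩ := ih
    obtain ⟨S, hS, hap, rfl⟩ := hstep
    by_cases hSR : S = R
    · subst hSR
      have hshift : ∀ i, applyRule S a i + S.1 i = a i + S.2 i := by
        intro i; have := hap i; simp only [applyRule]; omega
      obtain ⟨E', hE', hEr⟩ := shift_path Γ S hleaf hE a hshift
      refine ⟨m + 1, E', hE', fun i => ?_⟩
      have h1 := hrel i
      have h2 := hEr i
      ring_nf
      ring_nf at h1 h2
      omega
    · exact ⟨m, E, Relation.ReflTransGen.head ⟨S, ⟨hS, hSR⟩, hap, rfl⟩ hE, hrel⟩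

lemma product_const {Λ : Type*} (Γ : Set (Rule Λ)) (R : Rule Λ)
    (hleaf : ∀ R' ∈ Γ, R' ≠ R → ∀ i, R.2 i > 0 → R'.1 i = 0)
    (honly : ∀ R' ∈ Γ, R' ≠ R → ∀ i, R.2 i > 0 → R'.2 i = 0)
    {C E : Config Λ} (hr : Relation.ReflTransGen (Step (Γ \ {R})) C E) :
    ∀ i, R.2 i ≠ 0 → E i = C i := by
  induction hr with
  | refl => exact fun _ _ => rfl
  | tail _ hstep ih =>
    intro i hi
    obtain ⟨S, hS, hap, rfl⟩ := hstep
    have hSne : S ≠ R := fun h => hS.2 (by simp [h])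
    have h1 := hleaf S hS.1 hSne i (Nat.pos_of_ne_zero hi)
    have h2 := honly S hS.1 hSne i (Nat.pos_of_ne_zero hi)
    simp only [applyRule, h1, h2]
    rw [ih i hi]; omega

/-- pruning: let `R ∈ Γ` be a non-void leaf rule (no product of `R` is a
reactant of any other rule of `Γ`, and no other rule of `Γ` produces a product species
of `R`), and suppose `D` is consistent with `I` for `R` with witnessing count `x` and
pruned configuration `D' = D - x·(R_p - R_r)` (stated additively), where `D'` agrees
with `I` on product species of `R` and `R` can be applied (x times) from `D'` to reach
`D`. Then `D` is reachable from `I` under `Γ` iff `D'` is reachable from `I` under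
`Γ \ {R}`. -/
theorem stmt6 {Λ : Type*} (Γ : Set (Rule Λ)) (R : Rule Λ) (hR : R ∈ Γ)
    (hleaf : ∀ R' ∈ Γ, R' ≠ R → ∀ i, R.2 i > 0 → R'.1 i = 0)
    (honly : ∀ R' ∈ Γ, R' ≠ R → ∀ i, R.2 i > 0 → R'.2 i = 0)
    (hnonvoid : ∃ i, R.1 i < R.2 i)
    (I D D' : Config Λ) (x : ℕ)
    (hprune : ∀ i, D i + x * R.1 i = D' i + x * R.2 i)
    (hagree : ∀ i, R.2 i ≠ 0 → D' i = I i)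
    (happ : Relation.ReflTransGen (Step ({R} : Set (Rule Λ))) D' D) :
    Reachable Γ I D ↔ Reachable (Γ \ {R}) I D' := by
  constructor
  · intro h
    obtain ⟨m, E, hE, hrel⟩ := extract Γ R hleaf h
    have hconst := product_const Γ R hleaf honly hE
    -- show m = x using a nonvoid species
    obtain ⟨j, hj⟩ := hnonvoid
    have hj2 : R.2 j ≠ 0 := by omega
    have e1 : D j + m * R.1 j = I j + m * R.2 j := by
      rw [hrel j, hconst j hj2]
    have e2 : D j + x * R.1 j = I j + x * R.2 j := by
      rw [hprune j, hagree j hj2]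
    have hmx : m = x := by
      rcases Nat.lt_trichotomy m x with h | h | h
      · nlinarith [Nat.mul_lt_mul_of_lt_of_le h (le_refl (R.2 j - R.1 j))]
      · exact h
      · nlinarith [Nat.mul_lt_mul_of_lt_of_le h (le_refl (R.2 j - R.1 j))]
    have hED : E = D' := by
      funext i
      by_cases hi : R.2 i = 0
      · have := hrel i; have := hprune i; subst hmx
        simp [hi] at *; omega
      · rw [hconst i hi, hagree i hi]
    rwa [hED] at hE
  · intro h
    have h1 : Reachable Γ I D' := reach_mono Set.diff_subset h
    have h2 : Relation.ReflTransGen (Step Γ) D' D :=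
      reach_mono (by simpa using hR) happ
    exact h1.trans h2
end

section
/- Let H = (X, Y, Z, T) be a 3-dimensional matching instance with |X| = |Y| = |Z| = n. Construct the CRN with species Λ = X ∪ Y ∪ Z (disjoint) and rules Γ = { x + y + z → ∅ : (x,y,z) ∈ T }, initial configuration I assigning count 1 to every species, and target configuration D assigning count 0 to every species. Then D is reachable from I under Γ if and only if there exists a perfect 3-dimensional matching, i.e., a subset M ⊆ T covering every vertex of X ∪ Y ∪ Z exactly once. -/
def rOf {X Y Z : Type*} [DecidableEq X] [DecidableEq Y] [DecidableEq Z]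
    (t : X × Y × Z) : (X ⊕ Y ⊕ Z) → ℕ
  | Sum.inl x => if x = t.1 then 1 else 0
  | Sum.inr (Sum.inl y) => if y = t.2.1 then 1 else 0
  | Sum.inr (Sum.inr z) => if z = t.2.2 then 1 else 0

lemma rOf_le_one {X Y Z : Type*} [DecidableEq X] [DecidableEq Y] [DecidableEq Z]
    (t : X × Y × Z) (i : X ⊕ Y ⊕ Z) : rOf t i ≤ 1 := by
  rcases i with x | y | z <;> simp only [rOf] <;> split <;> simp

lemma backward_aux {X Y Z : Type*} [DecidableEq X] [DecidableEq Y] [DecidableEq Z]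
    (T : Finset (X × Y × Z)) (M : Finset (X × Y × Z)) (hMT : M ⊆ T) :
    Reachable {R : Rule (X ⊕ Y ⊕ Z) | ∃ t ∈ T, R = (rOf t, fun _ => 0)}
      (fun i => ∑ t ∈ M, rOf t i) (fun _ => 0) := by
  induction M using Finset.induction_on with
  | empty => simpa [Reachable] using Relation.ReflTransGen.refl
  | @insert t S htS ih =>
    have htT : t ∈ T := hMT (Finset.mem_insert_self t S)
    have hST : S ⊆ T := fun a ha => hMT (Finset.mem_insert_of_mem ha)
    refine Relation.ReflTransGen.head ?_ (ih hST)
    refine ⟨(rOf t, fun _ => 0), ⟨t, htT, rfl⟩, ?_, ?_⟩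
    · intro i
      simpa using Finset.single_le_sum (f := fun u => rOf u i)
        (fun _ _ => Nat.zero_le _) (Finset.mem_insert_self t S)
    · funext i
      simp [applyRule, Finset.sum_insert htS]

lemma forward_aux {X Y Z : Type*} [DecidableEq X] [DecidableEq Y] [DecidableEq Z]
    (T : Finset (X × Y × Z)) :
    ∀ C : Config (X ⊕ Y ⊕ Z),
      Reachable {R : Rule (X ⊕ Y ⊕ Z) | ∃ t ∈ T, R = (rOf t, fun _ => 0)} C (fun _ => 0) →
      (∀ i, C i ≤ 1) →
      ∃ M : Finset (X × Y × Z), M ⊆ T ∧ ∀ i, (∑ t ∈ M, rOf t i) = C i := by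
  intro C h
  induction h using Relation.ReflTransGen.head_induction_on with
  | refl => intro _; exact ⟨∅, by simp, fun i => by simp⟩
  | @head C C' hstep htail ih =>
    intro hC
    obtain ⟨R, ⟨t, htT, rfl⟩, happ, hC'⟩ := hstep
    have hCle : ∀ i, rOf t i ≤ C i := happ
    have hC'eq : ∀ i, C' i = C i - rOf t i := by
      intro i; rw [hC']; simp [applyRule]
    have hC'le : ∀ i, C' i ≤ 1 := fun i => by
      rw [hC'eq i]; exact le_trans (Nat.sub_le _ _) (hC i)
    obtain ⟨M', hM'T, hM'⟩ := ih hC'le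
    have htM' : t ∉ M' := by
      intro hmem
      have h1 : (1 : ℕ) ≤ ∑ u ∈ M', rOf u (Sum.inl t.1) := by
        have := Finset.single_le_sum (f := fun u => rOf u (Sum.inl t.1))
          (fun _ _ => Nat.zero_le _) hmem
        simpa [rOf] using this
      have h2 : C' (Sum.inl t.1) = C (Sum.inl t.1) - rOf t (Sum.inl t.1) := hC'eq _
      have h3 : rOf t (Sum.inl t.1) = 1 := by simp [rOf]
      have h4 : C (Sum.inl t.1) ≤ 1 := hC _
      have h5 := hM' (Sum.inl t.1)
      omega
    refine ⟨insert t M', ?_, ?_⟩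
    · intro a ha
      rcases Finset.mem_insert.mp ha with rfl | ha'
      · exact htT
      · exact hM'T ha'
    · intro i
      rw [Finset.sum_insert htM', hM' i, hC'eq i]
      have := hCle i
      omega

lemma sum_rOf_eq_one_iff {α : Type*} [DecidableEq α] {M : Finset α} {p : α → Prop}
    [DecidablePred p] (h : ∑ t ∈ M, (if p t then 1 else 0) = 1) :
    ∃! t, t ∈ M ∧ p t := by
  rw [← Finset.card_filter] at h
  obtain ⟨a, ha⟩ := Finset.card_eq_one.mp h
  refine ⟨a, ?_, ?_⟩
  · have : a ∈ M.filter p := ha ▸ Finset.mem_singleton_self a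
    exact Finset.mem_filter.mp this
  · intro b hb
    have : b ∈ M.filter p := Finset.mem_filter.mpr hb
    rw [ha] at this
    exact Finset.mem_singleton.mp this

lemma one_of_exists_unique {α : Type*} [DecidableEq α] {M : Finset α} {p : α → Prop}
    [DecidablePred p] (h : ∃! t, t ∈ M ∧ p t) :
    ∑ t ∈ M, (if p t then 1 else 0) = 1 := by
  rw [← Finset.card_filter]
  obtain ⟨a, ⟨haM, hpa⟩, hu⟩ := h
  rw [Finset.card_eq_one]
  refine ⟨a, Finset.ext fun b => ?_⟩
  simp only [Finset.mem_filter, Finset.mem_singleton]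
  exact ⟨fun hb => hu b hb, fun hb => hb ▸ ⟨haM, hpa⟩⟩

/-- for a 3DM instance `(X, Y, Z, T)` with `|X| = |Y| = |Z|`, the all-zeros
configuration is reachable from the all-ones configuration under the rules
`{ S_x + S_y + S_z → ∅ : (x,y,z) ∈ T }` iff there is a perfect 3-dimensional matching
`M ⊆ T` covering every vertex exactly once. -/
theorem stmt8 {X Y Z : Type*} [Fintype X] [Fintype Y] [Fintype Z]
    [DecidableEq X] [DecidableEq Y] [DecidableEq Z]
    (hXY : Fintype.card X = Fintype.card Y) (hYZ : Fintype.card Y = Fintype.card Z)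
    (T : Finset (X × Y × Z)) :
    Reachable {R : Rule (X ⊕ Y ⊕ Z) | ∃ t ∈ T, R = (rOf t, fun _ => 0)}
        (fun _ => 1) (fun _ => 0) ↔
      ∃ M : Finset (X × Y × Z), M ⊆ T ∧
        (∀ x : X, ∃! t, t ∈ M ∧ t.1 = x) ∧
        (∀ y : Y, ∃! t, t ∈ M ∧ t.2.1 = y) ∧
        (∀ z : Z, ∃! t, t ∈ M ∧ t.2.2 = z) := by
  constructor
  · intro h
    obtain ⟨M, hMT, hM⟩ := forward_aux T _ h (fun _ => le_refl 1)
    refine ⟨M, hMT, ?_, ?_, ?_⟩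
    · intro x
      have h' : ∑ t ∈ M, (if x = t.1 then 1 else 0) = 1 := by
        have := hM (Sum.inl x); simpa [rOf] using this
      obtain ⟨a, ⟨haM, hxa⟩, hu⟩ := sum_rOf_eq_one_iff h'
      exact ⟨a, ⟨haM, hxa.symm⟩, fun b hb => hu b ⟨hb.1, hb.2.symm⟩⟩
    · intro y
      have h' : ∑ t ∈ M, (if y = t.2.1 then 1 else 0) = 1 := by
        have := hM (Sum.inr (Sum.inl y)); simpa [rOf] using this
      obtain ⟨a, ⟨haM, hxa⟩, hu⟩ := sum_rOf_eq_one_iff h'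
      exact ⟨a, ⟨haM, hxa.symm⟩, fun b hb => hu b ⟨hb.1, hb.2.symm⟩⟩
    · intro z
      have h' : ∑ t ∈ M, (if z = t.2.2 then 1 else 0) = 1 := by
        have := hM (Sum.inr (Sum.inr z)); simpa [rOf] using this
      obtain ⟨a, ⟨haM, hxa⟩, hu⟩ := sum_rOf_eq_one_iff h'
      exact ⟨a, ⟨haM, hxa.symm⟩, fun b hb => hu b ⟨hb.1, hb.2.symm⟩⟩
  · rintro ⟨M, hMT, hx, hy, hz⟩
    have key : (fun _ => 1 : Config (X ⊕ Y ⊕ Z)) = fun i => ∑ t ∈ M, rOf t i := by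
      funext i
      rcases i with x | y | z
      · obtain ⟨a, ⟨haM, hxa⟩, hu⟩ := hx x
        have : ∃! t, t ∈ M ∧ x = t.1 :=
          ⟨a, ⟨haM, hxa.symm⟩, fun b hb => hu b ⟨hb.1, hb.2.symm⟩⟩
        simpa [rOf] using (one_of_exists_unique this).symm
      · obtain ⟨a, ⟨haM, hxa⟩, hu⟩ := hy y
        have : ∃! t, t ∈ M ∧ y = t.2.1 :=
          ⟨a, ⟨haM, hxa.symm⟩, fun b hb => hu b ⟨hb.1, hb.2.symm⟩⟩
        simpa [rOf] using (one_of_exists_unique this).symm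
      · obtain ⟨a, ⟨haM, hxa⟩, hu⟩ := hz z
        have : ∃! t, t ∈ M ∧ z = t.2.2 :=
          ⟨a, ⟨haM, hxa.symm⟩, fun b hb => hu b ⟨hb.1, hb.2.symm⟩⟩
        simpa [rOf] using (one_of_exists_unique this).symm
    rw [key]
    exact backward_aux T M hMT
end

section
/- Let (Λ, Γ) be a CRN whose rules are all of size (2,0), i.e., each rule consumes two species (possibly equal) and produces nothing. Given configurations I ≥ D componentwise, D is reachable from I if and only if the multigraph whose vertex multiset consists of (I − D)(i) copies of each species i, with edges joining every copy of species a to every copy of species b whenever a + b → ∅ is a rule (including edges among copies of the same species a when 2a → ∅ is a rule), has a perfect matching. -/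
/-- for a CRN whose rules are the size-(2,0) void rules `a + b → ∅` for
`(a,b) ∈ E` (possibly `a = b`, giving `2a → ∅`), and configurations `I ≥ D`, `D` is
reachable from `I` iff the multigraph on `(I-D)(i)` copies of each species `i` (with
edges between copies of `a` and `b` for each rule) has a perfect matching; equivalently,
iff there is a multiset of rule applications — `f p` applications of the rule for each
pair `p ∈ E`, each application matching up and removing its two species copies — whose
total consumption is exactly `I - D`. -/
theorem stmt10 {Λ : Type*} [DecidableEq Λ] (E : Finset (Λ × Λ)) (I D : Config Λ)
    (hID : ∀ i, D i ≤ I i) :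
    Reachable {R : Rule Λ | ∃ p ∈ E,
        R = ((Pi.single p.1 1 + Pi.single p.2 1 : Λ → ℕ), fun _ => 0)} I D ↔
      ∃ f : Λ × Λ → ℕ, (∀ p ∉ E, f p = 0) ∧
        ∀ i, I i = D i + ∑ p ∈ E, f p * (Pi.single p.1 1 + Pi.single p.2 1 : Λ → ℕ) i := by
  set w : Λ × Λ → Λ → ℕ := fun p => (Pi.single p.1 1 + Pi.single p.2 1 : Λ → ℕ) with hw
  set Γ : Set (Rule Λ) := {R : Rule Λ | ∃ p ∈ E, R = (w p, fun _ => 0)} with hΓ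
  constructor
  · -- forward
    intro h
    clear hID
    induction h with
    | refl => exact ⟨fun _ => 0, fun _ _ => rfl, fun i => by simp⟩
    | tail _ hstep ih =>
      rename_i C D' _
      obtain ⟨f, hf0, hfeq⟩ := ih
      obtain ⟨R, hR, happ, hD⟩ := hstep
      obtain ⟨q, hqE, rfl⟩ := hR
      refine ⟨fun p => f p + (if p = q then 1 else 0), ?_, ?_⟩
      · intro p hp
        have hpq : p ≠ q := fun h => hp (h ▸ hqE)
        simp [hf0 p hp, hpq]
      · intro i
        have hfeq' : ∀ i, I i = C i + ∑ p ∈ E, f p * w p i := hfeq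
        have hDi : D' i = C i - w q i := by rw [hD]; simp [applyRule]
        have happi : w q i ≤ C i := happ i
        have hs : ∑ p ∈ E, (f p + if p = q then 1 else 0) * w p i
            = (∑ p ∈ E, f p * w p i) + w q i := by
          simp only [add_mul, Finset.sum_add_distrib, ite_mul, one_mul, zero_mul]
          rw [Finset.sum_ite_eq' E q (fun p => w p i), if_pos hqE]
        show I i = D' i + ∑ p ∈ E, (f p + if p = q then 1 else 0) * w p i
        rw [hs, hfeq' i, hDi]
        omega
  · -- backward
    rintro ⟨f, hf0, hfeq⟩
    clear hID
    suffices H : ∀ n (f : Λ × Λ → ℕ) (I : Config Λ), ∑ p ∈ E, f p = n →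
        (∀ i, I i = D i + ∑ p ∈ E, f p * w p i) → Reachable Γ I D by
      exact H _ f I rfl hfeq
    clear hfeq hf0 f I
    intro n
    induction n with
    | zero =>
      intro f I hsum hfeq
      have hz : ∀ p ∈ E, f p = 0 := by
        intro p hp
        exact Finset.sum_eq_zero_iff.mp hsum p hp
      have : I = D := by
        funext i
        rw [hfeq i, Finset.sum_eq_zero (fun p hp => by rw [hz p hp, zero_mul])]
        omega
      rw [this]
      exact Relation.ReflTransGen.refl
    | succ n ih =>
      intro f I hsum hfeq
      obtain ⟨q, hqE, hq⟩ : ∃ q ∈ E, f q ≠ 0 :=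
        Finset.exists_ne_zero_of_sum_ne_zero (by omega)
      obtain ⟨m, hm⟩ : ∃ m, f q = m + 1 := ⟨f q - 1, by omega⟩
      set f' : Λ × Λ → ℕ := fun p => if p = q then m else f p with hf'
      have hsplit : ∀ g : Λ × Λ → ℕ, ∑ p ∈ E, g p = g q + ∑ p ∈ E.erase q, g p :=
        fun g => (Finset.add_sum_erase E g hqE).symm
      have h4 : f' q = m := by simp [hf']
      have hsum' : ∑ p ∈ E, f' p = n := by
        have h1 := hsplit f
        have h2 := hsplit f'
        have h3 : ∑ p ∈ E.erase q, f' p = ∑ p ∈ E.erase q, f p := by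
          refine Finset.sum_congr rfl fun p hp => ?_
          simp [hf', Finset.ne_of_mem_erase hp]
        omega
      have hkey : ∀ i, ∑ p ∈ E, f p * w p i = w q i + ∑ p ∈ E, f' p * w p i := by
        intro i
        have h1 := hsplit (fun p => f p * w p i)
        have h2 := hsplit (fun p => f' p * w p i)
        have h3 : ∑ p ∈ E.erase q, f' p * w p i = ∑ p ∈ E.erase q, f p * w p i := by
          refine Finset.sum_congr rfl fun p hp => ?_
          simp [hf', Finset.ne_of_mem_erase hp]
        rw [h1, h2, h3, h4, hm]
        ring
      set C : Config Λ := fun i => I i - w q i with hC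
      have happ : Applicable (w q, fun _ => 0) I := by
        intro i
        have := hfeq i
        have := hkey i
        simp only at this ⊢
        omega
      have hstep : Step Γ I C := by
        refine ⟨(w q, fun _ => 0), ⟨q, hqE, rfl⟩, happ, ?_⟩
        funext i
        simp [hC, applyRule]
      refine Relation.ReflTransGen.head hstep (ih f' C hsum' ?_)
      intro i
      have h1 := hfeq i
      have h2 := hkey i
      simp only [hC]
      omega
end

section
/- Let (Λ, Γ) be a bipartite CRN with all rules of size (2,0): Λ = Λ₁ ⊔ Λ₂ and every rule is x + y → ∅ with x ∈ Λ₁, y ∈ Λ₂. Given configurations I ≥ D with Σ_{x∈Λ₁}(I−D)(x) = Σ_{y∈Λ₂}(I−D)(y), the configuration D is reachable from I if and only if the flow network—with source connected to each x ∈ Λ₁ with capacity (I−D)(x), each y ∈ Λ₂ connected to the sink with capacity (I−D)(y), and infinite-capacity edges between x and y whenever x + y → ∅ ∈ Γ—admits a flow of value volume(I−D)/2. -/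
section Aux

variable {A B : Type*} [Fintype A] [Fintype B] [DecidableEq A] [DecidableEq B]

def GammaE (E : Finset (A × B)) : Set (Rule (A ⊕ B)) :=
  {R : Rule (A ⊕ B) | ∃ p ∈ E,
      R = ((Pi.single (Sum.inl p.1) 1 + Pi.single (Sum.inr p.2) 1 : (A ⊕ B) → ℕ),
           fun _ => 0)}

lemma reach_mono_s11 (E : Finset (A × B)) {C D : Config (A ⊕ B)}
    (h : Reachable (GammaE E) C D) : ∀ i, D i ≤ C i := by
  induction h with
  | refl => intro i; exact le_refl _
  | tail _ hstep ih =>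
    intro i
    obtain ⟨R, hR, hap, rfl⟩ := hstep
    obtain ⟨p, hp, rfl⟩ := hR
    exact le_trans (by simp [applyRule]) (ih i)

lemma flow_of_reach (E : Finset (A × B)) {I D : Config (A ⊕ B)}
    (h : Reachable (GammaE E) I D) :
    ∃ f : A × B → ℕ, (∀ p ∉ E, f p = 0) ∧
      (∀ a : A, ∑ b : B, f (a, b) = I (Sum.inl a) - D (Sum.inl a)) ∧
      (∀ b : B, ∑ a : A, f (a, b) = I (Sum.inr b) - D (Sum.inr b)) := by
  induction h using Relation.ReflTransGen.head_induction_on with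
  | refl => exact ⟨0, by simp, by simp, by simp⟩
  | head hstep hrest ih =>
    rename_i I C
    obtain ⟨f, hf0, hfa, hfb⟩ := ih
    obtain ⟨R, hR, hap, hC⟩ := hstep
    obtain ⟨⟨a, b⟩, hp, rfl⟩ := hR
    have hmono := reach_mono_s11 E hrest
    have hCl : ∀ a' : A, C (Sum.inl a') = I (Sum.inl a') - (if a' = a then 1 else 0) := by
      intro a'; rw [hC]; simp [applyRule, Pi.single_apply]
    have hCr : ∀ b' : B, C (Sum.inr b') = I (Sum.inr b') - (if b' = b then 1 else 0) := by
      intro b'; rw [hC]; simp [applyRule, Pi.single_apply]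
    have hIa : 1 ≤ I (Sum.inl a) := by
      have := hap (Sum.inl a); simp [Pi.single_apply] at this; omega
    have hIb : 1 ≤ I (Sum.inr b) := by
      have := hap (Sum.inr b); simp [Pi.single_apply] at this; omega
    refine ⟨fun q => f q + (if q = (a, b) then 1 else 0), ?_, ?_, ?_⟩
    · intro q hq
      have h1 := hf0 q hq
      have : q ≠ (a, b) := by rintro rfl; exact hq hp
      simp [h1, this]
    · intro a'
      have hsum : ∑ b' : B, (f (a', b') + (if (a', b') = (a, b) then 1 else 0))
          = (∑ b' : B, f (a', b')) + (if a' = a then 1 else 0) := by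
        rw [Finset.sum_add_distrib]
        congr 1
        simp only [Prod.mk.injEq]
        by_cases ha : a' = a
        · subst ha; simp
        · simp [ha]
      rw [hsum, hfa a']
      have h1 := hmono (Sum.inl a')
      have h2 := hCl a'
      have h3 := hCl a
      have h4 := hmono (Sum.inl a)
      by_cases ha : a' = a
      · subst ha; simp at h2 ⊢; omega
      · simp [ha] at h2 ⊢; omega
    · intro b'
      have hsum : ∑ a' : A, (f (a', b') + (if (a', b') = (a, b) then 1 else 0))
          = (∑ a' : A, f (a', b')) + (if b' = b then 1 else 0) := by
        rw [Finset.sum_add_distrib]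
        congr 1
        simp only [Prod.mk.injEq]
        by_cases hb : b' = b
        · subst hb; simp
        · simp [hb]
      rw [hsum, hfb b']
      have h1 := hmono (Sum.inr b')
      have h2 := hCr b'
      have h3 := hCr b
      have h4 := hmono (Sum.inr b)
      by_cases hb : b' = b
      · subst hb; simp at h2 ⊢; omega
      · simp [hb] at h2 ⊢; omega

lemma reach_of_flow (E : Finset (A × B)) :
    ∀ (N : ℕ) (f : A × B → ℕ) (I D : Config (A ⊕ B)),
      (∑ p : A × B, f p) = N →
      (∀ p ∉ E, f p = 0) →
      (∀ a : A, ∑ b : B, f (a, b) = I (Sum.inl a) - D (Sum.inl a)) →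
      (∀ b : B, ∑ a : A, f (a, b) = I (Sum.inr b) - D (Sum.inr b)) →
      (∀ i, D i ≤ I i) →
      Reachable (GammaE E) I D := by
  intro N
  induction N with
  | zero =>
    intro f I D hsum hf0 hfa hfb hID
    have hz : ∀ p : A × B, f p = 0 := by
      intro p
      have := Finset.sum_eq_zero_iff.mp hsum p (Finset.mem_univ p)
      exact this
    have : I = D := by
      funext i
      cases i with
      | inl a =>
        have := hfa a
        simp only [hz] at this
        simp at this
        have := hID (Sum.inl a)
        omega
      | inr b =>
        have := hfb b
        simp only [hz] at this
        simp at this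
        have := hID (Sum.inr b)
        omega
    rw [this]
    exact Relation.ReflTransGen.refl
  | succ n ih =>
    intro f I D hsum hf0 hfa hfb hID
    have hex : ∃ p : A × B, 0 < f p := by
      by_contra hc
      push_neg at hc
      have : ∑ p : A × B, f p = 0 := Finset.sum_eq_zero (fun p _ => Nat.le_zero.mp (hc p))
      omega
    obtain ⟨⟨a, b⟩, hab⟩ := hex
    have hpE : (a, b) ∈ E := by
      by_contra hc
      have := hf0 (a, b) hc
      omega
    -- facts about demands
    have hda : f (a, b) ≤ I (Sum.inl a) - D (Sum.inl a) := by
      rw [← hfa a]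
      exact Finset.single_le_sum (f := fun b' => f (a, b')) (fun _ _ => Nat.zero_le _)
        (Finset.mem_univ b)
    have hdb : f (a, b) ≤ I (Sum.inr b) - D (Sum.inr b) := by
      rw [← hfb b]
      exact Finset.single_le_sum (f := fun a' => f (a', b)) (fun _ _ => Nat.zero_le _)
        (Finset.mem_univ a)
    have hIa : D (Sum.inl a) + 1 ≤ I (Sum.inl a) := by
      have := hID (Sum.inl a); omega
    have hIb : D (Sum.inr b) + 1 ≤ I (Sum.inr b) := by
      have := hID (Sum.inr b); omega
    set R : Rule (A ⊕ B) :=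
      ((Pi.single (Sum.inl a) 1 + Pi.single (Sum.inr b) 1 : (A ⊕ B) → ℕ),
       fun _ => 0) with hRdef
    have hR1 : ∀ i, R.1 i = (if i = Sum.inl a then 1 else 0) + (if i = Sum.inr b then 1 else 0) := by
      intro i; simp [hRdef, Pi.single_apply]
    set I' : Config (A ⊕ B) := applyRule R I with hI'def
    have hI'l : ∀ a' : A, I' (Sum.inl a') = I (Sum.inl a') - (if a' = a then 1 else 0) := by
      intro a'; simp [hI'def, applyRule, hR1, Pi.single_apply, show ∀ i, R.2 i = 0 from fun _ => rfl]
    have hI'r : ∀ b' : B, I' (Sum.inr b') = I (Sum.inr b') - (if b' = b then 1 else 0) := by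
      intro b'; simp [hI'def, applyRule, hR1, Pi.single_apply, show ∀ i, R.2 i = 0 from fun _ => rfl]
    set f' : A × B → ℕ := fun q => f q - (if q = (a, b) then 1 else 0) with hf'def
    have hstep : Step (GammaE E) I I' := by
      refine ⟨R, ⟨(a, b), hpE, rfl⟩, ?_, rfl⟩
      intro i
      rw [hR1]
      cases i with
      | inl a' => by_cases h : a' = a <;> simp [h] <;> omega
      | inr b' => by_cases h : b' = b <;> simp [h] <;> omega
    have hrest : Reachable (GammaE E) I' D := by
      apply ih f' I' D
      · have : ∑ p : A × B, f' p = (∑ p : A × B, f p) - 1 := by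
          rw [hf'def]
          rw [Finset.sum_tsub_distrib _ (fun p _ => by
            by_cases h : p = (a, b) <;> simp [h] <;> omega)]
          congr 1
          simp
        omega
      · intro p hp
        have := hf0 p hp
        simp [hf'def, this]
      · intro a'
        have hsum' : ∑ b' : B, f' (a', b')
            = (∑ b' : B, f (a', b')) - (if a' = a then 1 else 0) := by
          simp only [hf'def]
          rw [Finset.sum_tsub_distrib _ (fun b' _ => by
            by_cases h : (a', b') = (a, b)
            · rcases h with ⟨rfl, rfl⟩; simp; omega
            · simp [h])]
          congr 1
          simp only [Prod.mk.injEq]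
          by_cases h : a' = a
          · subst h; simp
          · simp [h]
        rw [hsum', hfa a', hI'l a']
        by_cases h : a' = a
        · subst h; simp; omega
        · simp [h]
      · intro b'
        have hsum' : ∑ a' : A, f' (a', b')
            = (∑ a' : A, f (a', b')) - (if b' = b then 1 else 0) := by
          simp only [hf'def]
          rw [Finset.sum_tsub_distrib _ (fun a' _ => by
            by_cases h : (a', b') = (a, b)
            · rcases h with ⟨rfl, rfl⟩; simp; omega
            · simp [h])]
          congr 1
          simp only [Prod.mk.injEq]
          by_cases h : b' = b
          · subst h; simp
          · simp [h]
        rw [hsum', hfb b', hI'r b']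
        by_cases h : b' = b
        · subst h; simp; omega
        · simp [h]
      · intro i
        cases i with
        | inl a' =>
          rw [hI'l a']
          have := hID (Sum.inl a')
          by_cases h : a' = a
          · subst h; simp; omega
          · simp [h]; omega
        | inr b' =>
          rw [hI'r b']
          have := hID (Sum.inr b')
          by_cases h : b' = b
          · subst h; simp; omega
          · simp [h]; omega
    exact Relation.ReflTransGen.head hstep hrest

end Aux

/-- bipartite CRN with species `Λ₁ ⊔ Λ₂ = A ⊕ B` and size-(2,0) rules
`x + y → ∅` for `(x,y) ∈ E ⊆ A × B`. Given `I ≥ D` with balanced demands, `D` is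
reachable from `I` iff the flow network (source→`x` with capacity `(I-D)(x)`,
`y`→sink with capacity `(I-D)(y)`, infinite capacity rule edges) has a flow of value
`vol(I-D)/2`; equivalently (max-flow integrality), iff there are nonnegative integers
`f(x,y)` supported on the rule edges routing all the demands. -/
theorem stmt11 {A B : Type*} [Fintype A] [Fintype B] [DecidableEq A] [DecidableEq B]
    (E : Finset (A × B)) (I D : Config (A ⊕ B))
    (hID : ∀ i, D i ≤ I i)
    (hbal : ∑ a : A, (I (Sum.inl a) - D (Sum.inl a)) =
            ∑ b : B, (I (Sum.inr b) - D (Sum.inr b))) :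
    Reachable {R : Rule (A ⊕ B) | ∃ p ∈ E,
        R = ((Pi.single (Sum.inl p.1) 1 + Pi.single (Sum.inr p.2) 1 : (A ⊕ B) → ℕ),
             fun _ => 0)} I D ↔
      ∃ f : A × B → ℕ, (∀ p ∉ E, f p = 0) ∧
        (∀ a : A, ∑ b : B, f (a, b) = I (Sum.inl a) - D (Sum.inl a)) ∧
        (∀ b : B, ∑ a : A, f (a, b) = I (Sum.inr b) - D (Sum.inr b)) := by
  constructor
  · intro h
    exact flow_of_reach E h
  · rintro ⟨f, hf0, hfa, hfb⟩
    exact reach_of_flow E (∑ p : A × B, f p) f I D rfl hf0 hfa hfb hID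
end

section
/- In a CRN where every rule is a void rule (products vector componentwise ≤ reactants vector, with application vector having no positive entries), configuration D is reachable from I if and only if there exist nonnegative integers f(R) for each rule R such that Σ_R f(R)·(R_r − R_p) = I − D. In particular, the order of applications is irrelevant: any total count assignment with the correct sum is realizable by some ordering. -/
private lemma sum_key {Λ : Type*} [DecidableEq (Rule Λ)] (Γ : Finset (Rule Λ))
    {R : Rule Λ} (hR : R ∈ Γ) (f : Rule Λ → ℕ) (m : ℕ) (g : Rule Λ → ℕ) :
    ∑ R' ∈ Γ, (Function.update f R m) R' * g R'
      = m * g R + ∑ R' ∈ Γ.erase R, f R' * g R' := by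
  rw [← Finset.add_sum_erase Γ _ hR, Function.update_self]
  congr 1
  exact Finset.sum_congr rfl fun x hx =>
    by rw [Function.update_of_ne (Finset.ne_of_mem_erase hx)]

private lemma back_aux {Λ : Type*} [DecidableEq (Rule Λ)] (Γ : Finset (Rule Λ))
    (hvoid : ∀ R ∈ Γ, R.2 = fun _ => 0) :
    ∀ n (f : Rule Λ → ℕ), (∑ R ∈ Γ, f R) = n → ∀ I D : Config Λ,
      (∀ i, I i = D i + ∑ R ∈ Γ, f R * R.1 i) → Reachable (↑Γ : Set (Rule Λ)) I D := by
  intro n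
  induction n with
  | zero =>
    intro f hf I D hID
    have hz : ∀ R ∈ Γ, f R = 0 := by
      intro R hR; exact (Finset.sum_eq_zero_iff.mp hf) R hR
    have hIeq : I = D := by
      funext i
      have : ∑ R ∈ Γ, f R * R.1 i = 0 :=
        Finset.sum_eq_zero fun R hR => by rw [hz R hR, Nat.zero_mul]
      have := hID i; omega
    rw [hIeq]
    exact Relation.ReflTransGen.refl
  | succ n ih =>
    intro f hf I D hID
    obtain ⟨R, hR, hfR⟩ : ∃ R ∈ Γ, f R ≠ 0 := by
      by_contra h
      push_neg at h
      have : ∑ R ∈ Γ, f R = 0 := Finset.sum_eq_zero h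
      omega
    have hmul : ∀ g : ℕ, f R * g = g + (f R - 1) * g := by
      intro g
      obtain ⟨m, hm⟩ : ∃ m, f R = m + 1 := ⟨f R - 1, by omega⟩
      rw [hm, Nat.add_sub_cancel, Nat.add_mul, Nat.one_mul, Nat.add_comm]
    have hsplit : ∀ g : Rule Λ → ℕ, ∑ R' ∈ Γ, f R' * g R'
        = g R + ((f R - 1) * g R + ∑ R' ∈ Γ.erase R, f R' * g R') := by
      intro g
      rw [← Finset.add_sum_erase Γ _ hR, hmul (g R), Nat.add_assoc]
    have happ : Applicable R I := by
      intro i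
      have := hID i
      have := hsplit (fun R' => R'.1 i)
      omega
    have hstep : Step (↑Γ : Set (Rule Λ)) I (applyRule R I) :=
      ⟨R, hR, happ, rfl⟩
    have hRp : R.2 = fun _ => 0 := hvoid R hR
    refine Relation.ReflTransGen.head hstep
      (ih (Function.update f R (f R - 1)) ?_ _ _ ?_)
    · rw [Finset.sum_update_of_mem hR, Finset.sdiff_singleton_eq_erase]
      rw [← Finset.add_sum_erase Γ f hR] at hf
      omega
    · intro i
      have h1 := hID i
      have h2 := hsplit (fun R' => R'.1 i)
      have h3 : ∑ R' ∈ Γ, (Function.update f R (f R - 1)) R' * R'.1 i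
          = (f R - 1) * R.1 i + ∑ R' ∈ Γ.erase R, f R' * R'.1 i :=
        sum_key Γ hR f (f R - 1) (fun R' => R'.1 i)
      have h4 : applyRule R I i = I i - R.1 i := by
        simp [applyRule, hRp]
      have h5 := happ i
      omega

/-- in a CRN where every rule is a pure void rule (`R_p = 0`, size (k,0)),
`D` is reachable from `I` iff there exist nonnegative integers `f(R)` for each rule with
`Σ_R f(R)·(R_r - R_p) = I - D` (here `Σ_R f(R)·R_r = I - D`); the order of application
is irrelevant. -/
theorem stmt13 {Λ : Type*} (Γ : Finset (Rule Λ))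
    (hvoid : ∀ R ∈ Γ, R.2 = fun _ => 0)
    (I D : Config Λ) :
    Reachable (↑Γ : Set (Rule Λ)) I D ↔
      ∃ f : Rule Λ → ℕ, ∀ i, I i = D i + ∑ R ∈ Γ, f R * R.1 i := by
  classical
  constructor
  · intro h
    induction h with
    | refl => exact ⟨fun _ => 0, fun i => by simp⟩
    | @tail C D' hIC hstep ih =>
      obtain ⟨f, hfeq⟩ := ih
      obtain ⟨R, hR, happ, hD⟩ := hstep
      have hRΓ : R ∈ Γ := hR
      have hRp : R.2 = fun _ => 0 := hvoid R hRΓ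
      subst hD
      refine ⟨Function.update f R (f R + 1), fun i => ?_⟩
      have h1 : ∑ R' ∈ Γ, (Function.update f R (f R + 1)) R' * R'.1 i
          = (f R + 1) * R.1 i + ∑ R' ∈ Γ.erase R, f R' * R'.1 i :=
        sum_key Γ hRΓ f (f R + 1) (fun R' => R'.1 i)
      have h2 : ∑ R' ∈ Γ, f R' * R'.1 i
          = f R * R.1 i + ∑ R' ∈ Γ.erase R, f R' * R'.1 i :=
        (Finset.add_sum_erase Γ _ hRΓ).symm
      have h3 : applyRule R C i = C i - R.1 i := by
        simp [applyRule, hRp]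
      have h4 := happ i
      have h5 := hfeq i
      have h6 : (f R + 1) * R.1 i = f R * R.1 i + R.1 i := by ring
      omega
  · rintro ⟨f, hf⟩
    exact back_aux Γ hvoid _ f rfl I D hf
end

section
/- In a feed-forward CRN with no autogenesis rules, for any valid sequence of rule applications from configuration I, the number of applications of each individual rule is at most the volume of the configuration immediately before its (contiguous) block of applications in the ordered form; consequently, for every rule R in an ordered application from I to D, the number of applications of R is bounded by the maximum volume attained along the sequence, which is at most volume(I) + volume(D) (since non-autogenesis rules consume at least one species per application and volumes only increase via the same applications that reach D). In particular, every rule with a strictly positive application vector volume is applied at most (volume(D) − volume(I))/(volume gain of R) + volume(I) times. -/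
/-- A sequence of exactly `n` rule applications from `C` to `C'`. -/
inductive StepsN {Λ : Type*} (Γ : Set (Rule Λ)) : ℕ → Config Λ → Config Λ → Prop
  | refl (C : Config Λ) : StepsN Γ 0 C C
  | tail {n : ℕ} {C M C' : Config Λ} :
      StepsN Γ n C M → Step Γ M C' → StepsN Γ (n + 1) C C'

def vol {Λ : Type*} [Fintype Λ] (C : Λ → ℕ) : ℕ := ∑ i, C i

lemma aux_decr {Λ : Type*} (R : Rule Λ) (s : Λ) (hcons : R.2 s < R.1 s)
    {n : ℕ} {C C' : Config Λ} (h : StepsN ({R} : Set (Rule Λ)) n C C') :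
    n + C' s ≤ C s := by
  induction h with
  | refl C => simp
  | @tail n C M C' hsteps hstep ih =>
    obtain ⟨R', hR', happ, heq⟩ := hstep
    rw [Set.mem_singleton_iff] at hR'
    have hM := happ s
    have h2 : C' s = applyRule R' _ s := congrFun heq s
    rw [hR'] at hM h2
    rw [h2]
    simp only [applyRule]
    omega

/-- key quantitative fact: if a non-autogenesis rule `R` strictly
decreases the count of some species `s` (`R_p s < R_r s`), then the number `n` of
contiguous applications of `R` (its block in an ordered application) starting from a
configuration `C` is at most the count `C s` at the start of the block, which is in
turn at most the volume of `C`. -/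
theorem stmt15 {Λ : Type*} [Fintype Λ] (R : Rule Λ) (s : Λ)
    (hcons : R.2 s < R.1 s)
    (n : ℕ) (C C' : Config Λ) (h : StepsN ({R} : Set (Rule Λ)) n C C') :
    n ≤ C s ∧ C s ≤ vol C := by
  constructor
  · have := aux_decr R s hcons h
    omega
  · exact Finset.single_le_sum (f := C) (fun i _ => Nat.zero_le _) (Finset.mem_univ s)
end

section
/- Let G = (V, E) be a directed graph with distinguished vertices s, t. Construct the CRN with species {X, X^v : X ∈ V} ∪ {X*_i : X ∈ V, 0 ≤ i ≤ |V|}, rules { A*_i + B → A^v + B*_{i+1} : (A,B) ∈ E, 0 ≤ i < |V| }, initial configuration I = {s*_0} ∪ { X : X ∈ V, X ≠ s } (one copy each), and target configuration D = { X^v : X ∈ V, X ≠ t } ∪ { t*_{|V|−1} }. Then D is reachable from I if and only if G has a Hamiltonian path from s to t. -/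
/-- Species of the Hamiltonian-path construction: plain `X`, visited `X^v`,
and starred `X*_i`. -/
abbrev Sp (V : Type*) := V ⊕ V ⊕ (V × ℕ)

def plain {V : Type*} (X : V) : Sp V := Sum.inl X
def vis {V : Type*} (X : V) : Sp V := Sum.inr (Sum.inl X)
def star {V : Type*} (X : V) (i : ℕ) : Sp V := Sum.inr (Sum.inr (X, i))

/-- Rules `A*_i + B → A^v + B*_{i+1}` for edges `(A,B) ∈ E` and `0 ≤ i < |V|`. -/
def hamRules {V : Type*} [Fintype V] [DecidableEq V] (E : V → V → Prop) :
    Set (Rule (Sp V)) :=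
  {R | ∃ A B i, E A B ∧ i < Fintype.card V ∧
    R = ((Pi.single (star A i) 1 + Pi.single (plain B) 1 : Sp V → ℕ),
         (Pi.single (vis A) 1 + Pi.single (star B (i + 1)) 1 : Sp V → ℕ))}

/-- Initial configuration: one copy of `s*_0` and one copy of each plain `X ≠ s`. -/
def hamI {V : Type*} [DecidableEq V] (s : V) : Config (Sp V)
  | Sum.inl X => if X = s then 0 else 1
  | Sum.inr (Sum.inl _) => 0
  | Sum.inr (Sum.inr p) => if p = (s, 0) then 1 else 0

/-- Target configuration: one copy of each `X^v` for `X ≠ t`, and one copy of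
`t*_{|V|-1}`. -/
def hamD {V : Type*} [Fintype V] [DecidableEq V] (t : V) : Config (Sp V)
  | Sum.inl _ => 0
  | Sum.inr (Sum.inl X) => if X = t then 0 else 1
  | Sum.inr (Sum.inr p) => if p = (t, Fintype.card V - 1) then 1 else 0

section Aux

variable {V : Type*} [Fintype V] [DecidableEq V]

/-- Configuration corresponding to a partial path `l`. -/
def pcfg (l : List V) : Config (Sp V)
  | Sum.inl X => if X ∈ l then 0 else 1
  | Sum.inr (Sum.inl X) => if X ∈ l.dropLast then 1 else 0
  | Sum.inr (Sum.inr p) => if some p.1 = l.getLast? ∧ p.2 = l.length - 1 then 1 else 0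

def GoodPath (E : V → V → Prop) (s : V) (l : List V) : Prop :=
  l ≠ [] ∧ l.head? = some s ∧ l.Nodup ∧ l.Chain' E

lemma star_eq (X : V) (i : ℕ) : _root_.star X i = Sum.inr (Sum.inr (X, i)) := rfl

lemma mem_of_getLast?' {l : List V} {a : V} (h : l.getLast? = some a) : a ∈ l := by
  have hne : l ≠ [] := by rintro rfl; simp at h
  have := List.getLast?_eq_getLast hne
  rw [this, Option.some.injEq] at h
  exact h ▸ List.getLast_mem hne

lemma pcfg_singleton (s : V) : pcfg [s] = hamI s := by
  funext x
  rcases x with X | X | ⟨X, i⟩ <;> simp [pcfg, hamI, eq_comm, Prod.ext_iff]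

lemma length_lt_card {l : List V} (hnd : l.Nodup) {B : V} (hB : B ∉ l) :
    l.length < Fintype.card V := by
  have h1 : (B :: l).Nodup := List.nodup_cons.mpr ⟨hB, hnd⟩
  have := h1.length_le_card
  simpa using this

lemma applicable_pcfg {l : List V} (hne : l ≠ []) {A B : V}
    (hlast : l.getLast? = some A) (hB : B ∉ l) :
    Applicable ((Pi.single (star A (l.length - 1)) 1 + Pi.single (plain B) 1 : Sp V → ℕ),
      (Pi.single (vis A) 1 + Pi.single (star B (l.length - 1 + 1)) 1 : Sp V → ℕ)) (pcfg l) := by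
  intro x
  rcases x with X | X | ⟨X, i⟩ <;>
    simp only [pcfg, Pi.add_apply, Pi.single_apply, star_eq, plain, vis, Sum.inr.injEq,
      Sum.inl.injEq, Prod.mk.injEq, reduceCtorEq, if_false, hlast, Option.some.injEq] <;>
    split_ifs <;> simp_all

lemma applyRule_pcfg {l : List V} (hne : l ≠ []) (hnd : l.Nodup) {A B : V}
    (hlast : l.getLast? = some A) (hB : B ∉ l) :
    applyRule ((Pi.single (star A (l.length - 1)) 1 + Pi.single (plain B) 1 : Sp V → ℕ),
      (Pi.single (vis A) 1 + Pi.single (star B (l.length - 1 + 1)) 1 : Sp V → ℕ)) (pcfg l)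
      = pcfg (l ++ [B]) := by
  have hlen : 1 ≤ l.length := List.length_pos_iff.mpr hne
  have hsucc : l.length - 1 + 1 = l.length := Nat.succ_pred_eq_of_pos hlen
  have hAmem : A ∈ l := mem_of_getLast?' hlast
  have hdrop : l.dropLast ++ [A] = l := by
    have := List.dropLast_append_getLast hne
    rwa [(Option.some.inj ((List.getLast?_eq_getLast hne).symm.trans hlast))] at this
  have hAnd : A ∉ l.dropLast := by
    have h2 := hnd
    rw [← hdrop, List.nodup_append] at h2
    exact fun h => h2.2.2 _ h _ (by simp) rfl
  have hmem : ∀ X : V, X ∈ l ↔ X ∈ l.dropLast ∨ X = A := by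
    intro X; rw [← hdrop]; simp
  funext x
  rcases x with X | X | ⟨X, i⟩
  · by_cases hXB : X = B <;>
      simp [applyRule, pcfg, Pi.single_apply, star_eq, plain, vis, hXB, hB]
  · by_cases hXA : X = A
    · simp [applyRule, pcfg, Pi.single_apply, star_eq, plain, vis, hXA, hAmem, hAnd,
        List.dropLast_concat]
    · simp only [applyRule, pcfg, Pi.add_apply, Pi.single_apply, star_eq, plain, vis,
        Sum.inr.injEq, Sum.inl.injEq, Prod.mk.injEq, reduceCtorEq, if_false,
        List.dropLast_concat]
      simp [hmem X, hXA]
  · simp only [applyRule, pcfg, Pi.add_apply, Pi.single_apply, star_eq, plain, vis,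
      Sum.inr.injEq, Sum.inl.injEq, Prod.mk.injEq, reduceCtorEq, if_false, hlast,
      List.getLast?_concat, List.length_append, List.length_cons, List.length_nil,
      Option.some.injEq, hsucc]
    have hlen2 : l.length + 1 - 1 = l.length := by omega
    rw [hlen2]
    by_cases h1 : X = A ∧ i = l.length - 1 <;> by_cases h2 : X = B ∧ i = l.length <;>
      split_ifs <;> simp_all <;> omega

lemma step_pcfg {E : V → V → Prop} {l : List V} (hne : l ≠ []) (hnd : l.Nodup)
    {A B : V} (hlast : l.getLast? = some A) (hB : B ∉ l) (hE : E A B) :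
    Step (hamRules E) (pcfg l) (pcfg (l ++ [B])) := by
  have hlen : 1 ≤ l.length := List.length_pos_iff.mpr hne
  refine ⟨_, ⟨A, B, l.length - 1, hE, ?_, rfl⟩, applicable_pcfg hne hlast hB,
    (applyRule_pcfg hne hnd hlast hB).symm⟩
  exact lt_of_lt_of_le (Nat.sub_lt hlen Nat.one_pos) (le_of_lt (length_lt_card hnd hB))

lemma step_inv {E : V → V → Prop} {l : List V} (hne : l ≠ []) (hnd : l.Nodup)
    {C' : Config (Sp V)} (h : Step (hamRules E) (pcfg l) C') :
    ∃ A B, l.getLast? = some A ∧ B ∉ l ∧ E A B ∧ C' = pcfg (l ++ [B]) := by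
  obtain ⟨R, ⟨A, B, i, hE, hi, rfl⟩, happ, rfl⟩ := h
  have h1 := happ (_root_.star A i)
  have h2 := happ (plain B)
  simp only [pcfg, Pi.add_apply, Pi.single_apply, star_eq, plain, vis, Sum.inr.injEq,
    Sum.inl.injEq, Prod.mk.injEq, reduceCtorEq, if_false, if_true, Option.some.injEq] at h1 h2
  have hB : B ∉ l := by
    by_contra hB
    simp [hB] at h2
  have hcond : some A = l.getLast? ∧ i = l.length - 1 := by
    by_contra hc
    rw [if_neg hc] at h1
    simp at h1
  obtain ⟨hlast, hieq⟩ := hcond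
  subst hieq
  exact ⟨A, B, hlast.symm, hB, hE, applyRule_pcfg hne hnd hlast.symm hB⟩

lemma good_concat {E : V → V → Prop} {s : V} {l : List V} (hg : GoodPath E s l)
    {A B : V} (hlast : l.getLast? = some A) (hB : B ∉ l) (hE : E A B) :
    GoodPath E s (l ++ [B]) := by
  obtain ⟨hne, hhead, hnd, hch⟩ := hg
  refine ⟨by simp, ?_, ?_, ?_⟩
  · rw [List.head?_append_of_ne_nil _ hne]; exact hhead
  · rw [List.nodup_append]
    exact ⟨hnd, List.nodup_singleton B, fun x hx y hy hxy => hB (by simp at hy; rw [← hy, ← hxy]; exact hx)⟩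
  · refine List.isChain_append.mpr ⟨hch, List.isChain_singleton B, ?_⟩
    intro x hx y hy
    simp [hlast] at hx
    simp at hy
    subst hx; subst hy; exact hE

lemma reach_iff {E : V → V → Prop} (s : V) (C : Config (Sp V)) :
    Reachable (hamRules E) (hamI s) C ↔ ∃ l, GoodPath E s l ∧ C = pcfg l := by
  constructor
  · intro h
    induction h with
    | refl =>
      exact ⟨[s], ⟨by simp, by simp, by simp, List.isChain_singleton s⟩, (pcfg_singleton s).symm⟩
    | tail hr hs ih =>
      obtain ⟨l, hg, rfl⟩ := ih
      obtain ⟨A, B, hlast, hB, hE, rfl⟩ := step_inv hg.1 hg.2.2.1 hs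
      exact ⟨l ++ [B], good_concat hg hlast hB hE, rfl⟩
  · rintro ⟨l, hg, rfl⟩
    induction l using List.reverseRecOn with
    | nil => exact absurd rfl hg.1
    | append_singleton m B ih =>
      obtain ⟨hne, hhead, hnd, hch⟩ := hg
      by_cases hm : m = []
      · subst hm
        simp at hhead
        subst hhead
        simp only [List.nil_append]
        rw [pcfg_singleton]
        exact Relation.ReflTransGen.refl
      · rw [List.head?_append_of_ne_nil _ hm] at hhead
        rw [List.nodup_append] at hnd
        replace hch := List.isChain_append.mp hch
        have hA : m.getLast? = some (m.getLast hm) := List.getLast?_eq_getLast hm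
        have hE : E (m.getLast hm) B := hch.2.2 _ (by simp [hA]) B (by simp)
        have hB : B ∉ m := fun hx => hnd.2.2 B hx B (by simp) rfl
        exact Relation.ReflTransGen.tail (ih ⟨hm, hhead, hnd.1, hch.1⟩)
          (step_pcfg hm hnd.1 hA hB hE)

end Aux

/-- the target configuration is reachable from the initial configuration
iff the graph `(V, E)` has a Hamiltonian path from `s` to `t` (a duplicate-free list of
all vertices, starting at `s`, ending at `t`, consecutive vertices joined by edges). -/
theorem stmt16 {V : Type*} [Fintype V] [DecidableEq V] (E : V → V → Prop) (s t : V) :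
    Reachable (hamRules E) (hamI s) (hamD t) ↔
      ∃ l : List V, l.Nodup ∧ l.length = Fintype.card V ∧
        l.head? = some s ∧ l.getLast? = some t ∧ l.Chain' E := by
  rw [reach_iff]
  constructor
  · rintro ⟨l, ⟨hne, hhead, hnd, hch⟩, hD⟩
    have hall : ∀ X : V, X ∈ l := by
      intro X
      have h := congrFun hD (plain X)
      simp only [hamD, pcfg, plain] at h
      by_contra hX
      simp [hX] at h
    have hlen : l.length = Fintype.card V := by
      have h1 : l.toFinset = Finset.univ := Finset.eq_univ_iff_forall.mpr
        (by simpa using hall)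
      have h2 := List.toFinset_card_of_nodup hnd
      rw [h1, Finset.card_univ] at h2
      exact h2.symm
    have hlastt : l.getLast? = some t := by
      have h := congrFun hD (_root_.star t (Fintype.card V - 1))
      simp only [hamD, pcfg, star_eq, if_pos rfl] at h
      by_cases hc : some t = l.getLast? ∧ Fintype.card V - 1 = l.length - 1
      · exact hc.1.symm
      · rw [if_neg hc] at h; simp at h
    exact ⟨l, hnd, hlen, hhead, hlastt, hch⟩
  · rintro ⟨l, hnd, hlen, hhead, hlast, hch⟩
    have hcard : 0 < Fintype.card V := Fintype.card_pos_iff.mpr ⟨s⟩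
    have hne : l ≠ [] := by
      intro h; rw [h] at hlen; simp at hlen; omega
    refine ⟨l, ⟨hne, hhead, hnd, hch⟩, ?_⟩
    have hall : ∀ X : V, X ∈ l := by
      have h1 : l.toFinset = Finset.univ :=
        Finset.eq_univ_of_card _ (by rw [List.toFinset_card_of_nodup hnd, hlen])
      intro X
      rw [← List.mem_toFinset, h1]
      exact Finset.mem_univ X
    have hdrop : l.dropLast ++ [t] = l := by
      have := List.dropLast_append_getLast hne
      rwa [(Option.some.inj ((List.getLast?_eq_getLast hne).symm.trans hlast))] at this
    have htnd : t ∉ l.dropLast := by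
      have h2 := hnd
      rw [← hdrop, List.nodup_append] at h2
      exact fun h => h2.2.2 _ h _ (by simp) rfl
    have hmem : ∀ X : V, X ∈ l.dropLast ↔ X ≠ t := by
      intro X
      constructor
      · intro h hXt; exact htnd (hXt ▸ h)
      · intro hXt
        have := hall X
        rw [← hdrop] at this
        simp at this
        tauto
    funext x
    rcases x with X | X | ⟨X, i⟩
    · simp [hamD, pcfg, hall]
    · simp only [hamD, pcfg, hmem X]
      split_ifs <;> simp_all
    · simp only [hamD, pcfg, hlast, hlen, Option.some.injEq, Prod.mk.injEq]
end

section
/- In the Hamiltonian-path CRN construction (species X, X^v, X*_i; rules A*_i + B → A^v + B*_{i+1}), every configuration reachable from the initial configuration contains exactly one copy of exactly one starred species X*_i, and the index i equals the number of rule applications performed; moreover each species X^v, once present, has its count never decreased. -/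
/-- in the Hamiltonian-path construction, every configuration reachable
from the initial configuration by `n` rule applications contains exactly one copy of
exactly one starred species, whose index equals `n`; moreover the count of each visited
species `X^v` never decreases in any step. -/
theorem stmt17 {V : Type*} [Fintype V] [DecidableEq V] (E : V → V → Prop) (s : V) :
    (∀ (n : ℕ) (C : Config (Sp V)), StepsN (hamRules E) n (hamI s) C →
      ∃ X : V, C (star X n) = 1 ∧
        ∀ (Y : V) (j : ℕ), ¬(Y = X ∧ j = n) → C (star Y j) = 0) ∧
    (∀ C C' : Config (Sp V), Step (hamRules E) C C' →
      ∀ X : V, C (vis X) ≤ C' (vis X)) := by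
  constructor
  · intro n
    induction n with
    | zero =>
      intro C h
      cases h with
      | refl =>
        refine ⟨s, ?_, ?_⟩
        · simp [hamI, _root_.star]
        · intro Y j hYj
          simp only [hamI, _root_.star]
          rw [if_neg]
          rintro ⟨rfl, rfl⟩
          exact hYj ⟨rfl, rfl⟩
    | succ n ih =>
      intro C' h
      cases h with
      | tail hM hstep =>
        rename_i M
        obtain ⟨X, hX1, hX0⟩ := ih M hM
        obtain ⟨R, hR, happ, rfl⟩ := hstep
        obtain ⟨A, B, i, hE, hi, rfl⟩ := hR
        have h1 : 1 ≤ M (_root_.star A i) := by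
          have := happ (_root_.star A i)
          simpa [_root_.star, plain, Pi.single_apply] using this
        have hAX : A = X ∧ i = n := by
          by_contra hc
          have := hX0 A i hc
          omega
        obtain ⟨rfl, rfl⟩ := hAX
        refine ⟨B, ?_, ?_⟩
        · have hM0 : M (_root_.star B (i + 1)) = 0 := by
            apply hX0; rintro ⟨rfl, h⟩; omega
          simp only [_root_.star] at hM0
          simp only [applyRule, _root_.star, plain, vis, Pi.single_apply, Pi.add_apply]
          have hne : ¬ ((B, i + 1) = (A, i)) := by
            rintro hh; rw [Prod.mk.injEq] at hh; omega
          simp [Prod.ext_iff, Prod.mk.injEq, hM0] at hne ⊢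
        · intro Y j hYj
          simp only [applyRule, _root_.star, plain, vis, Pi.single_apply, Pi.add_apply]
          by_cases hYA : Y = A ∧ j = i
          · obtain ⟨rfl, rfl⟩ := hYA
            have hM1 : M (_root_.star Y j) = 1 := hX1
            simp only [_root_.star] at hM1
            have hne2 : ¬ ((Y, j) = (B, j + 1)) := by
              rintro hh; rw [Prod.mk.injEq] at hh; omega
            simp [Prod.ext_iff, Prod.mk.injEq, hM1] at hne2 ⊢
          · have hM0 : M (_root_.star Y j) = 0 := hX0 Y j hYA
            simp only [_root_.star] at hM0
            have hne2 : ¬ ((Y, j) = (B, i + 1)) := by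
              rintro hh
              rw [Prod.mk.injEq] at hh
              exact hYj hh
            have hne1 : ¬ ((Y, j) = (A, i)) := by
              rintro hh
              rw [Prod.mk.injEq] at hh
              exact hYA hh
            simp only [Prod.mk.injEq] at hne1 hne2
            simp [Prod.ext_iff, Prod.mk.injEq, hM0, hne1, hne2]
  · intro C C' hstep X
    obtain ⟨R, hR, happ, rfl⟩ := hstep
    obtain ⟨A, B, i, hE, hi, rfl⟩ := hR
    simp only [applyRule, Pi.add_apply]
    have h1 : (Pi.single (_root_.star A i) 1 + Pi.single (plain B) 1 : Sp V → ℕ) (vis X) = 0 := by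
      simp [_root_.star, plain, vis, Pi.single_apply]
    simp only [Pi.add_apply] at h1
    omega
end

section
/- Consider the CRN reduction from 3DM with relaxed species-based source/consume bounds: species Λ = {S_v : v ∈ X ∪ Y ∪ Z} ∪ {a}, rules Γ = { S_x + S_y + S_z → a : (x,y,z) ∈ T }, initial configuration I with count 1 on each S_v and 0 on a, target D with count 0 on each S_v and count n = |X| on a. Then D is reachable from I if and only if the 3DM instance (X, Y, Z, T) has a perfect matching. Moreover, this CRN is feed-forward (species a is never a reactant) and contains no void or autogenesis rules. -/
/-- A finite rule set is feed-forward if it admits an ordering (a duplicate-free list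
enumerating it) such that products of any rule never occur as reactants of earlier
rules. -/
def FeedForward {Λ : Type*} (Γ : Finset (Rule Λ)) : Prop :=
  ∃ l : List (Rule Λ), l.Nodup ∧ (∀ R, R ∈ l ↔ R ∈ Γ) ∧
    l.Pairwise (fun Re Rl => ∀ i, Rl.2 i > 0 → Re.1 i = 0)

/-- Species: `S_v` for `v ∈ X ∪ Y ∪ Z` (the `Sum.inl` part) and the extra species `a`
(the `Sum.inr` part). -/
abbrev Sp19 (X Y Z : Type*) := (X ⊕ Y ⊕ Z) ⊕ Unit

/-- Reactants of the rule `S_x + S_y + S_z → a` for a hyperedge `t = (x,y,z)`. -/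
def r19r {X Y Z : Type*} [DecidableEq X] [DecidableEq Y] [DecidableEq Z]
    (t : X × Y × Z) : Sp19 X Y Z → ℕ
  | Sum.inl (Sum.inl x) => if x = t.1 then 1 else 0
  | Sum.inl (Sum.inr (Sum.inl y)) => if y = t.2.1 then 1 else 0
  | Sum.inl (Sum.inr (Sum.inr z)) => if z = t.2.2 then 1 else 0
  | Sum.inr _ => 0

/-- Products of the rule `S_x + S_y + S_z → a`: one copy of `a`. -/
def r19p {X Y Z : Type*} : Sp19 X Y Z → ℕ
  | Sum.inl _ => 0
  | Sum.inr _ => 1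

open Classical in
/-- The rule set `{ S_x + S_y + S_z → a : (x,y,z) ∈ T }`. -/
noncomputable def Γ19 {X Y Z : Type*} [DecidableEq X] [DecidableEq Y] [DecidableEq Z]
    (T : Finset (X × Y × Z)) : Finset (Rule (Sp19 X Y Z)) :=
  T.image (fun t => ((r19r t, r19p) : Rule (Sp19 X Y Z)))

/-- Initial configuration: one copy of each `S_v`, zero copies of `a`. -/
def I19 {X Y Z : Type*} : Config (Sp19 X Y Z)
  | Sum.inl _ => 1
  | Sum.inr _ => 0

/-- Target configuration: zero copies of each `S_v`, `n` copies of `a`. -/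
def D19 {X Y Z : Type*} (n : ℕ) : Config (Sp19 X Y Z)
  | Sum.inl _ => 0
  | Sum.inr _ => n

section Helpers19
variable {X Y Z : Type*} [DecidableEq X] [DecidableEq Y] [DecidableEq Z]

open Classical in
/-- Intermediate configuration after applying the rules for triples in `S`. -/
noncomputable def cov19 (S : Finset (X × Y × Z)) : Config (Sp19 X Y Z)
  | Sum.inl (Sum.inl x) => if ∃ t ∈ S, t.1 = x then 0 else 1
  | Sum.inl (Sum.inr (Sum.inl y)) => if ∃ t ∈ S, t.2.1 = y then 0 else 1
  | Sum.inl (Sum.inr (Sum.inr z)) => if ∃ t ∈ S, t.2.2 = z then 0 else 1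
  | Sum.inr _ => S.card

lemma cov19_empty : cov19 (∅ : Finset (X × Y × Z)) = I19 := by
  funext i
  rcases i with (x | y | z) | u <;> simp [cov19, I19]


lemma mem_Γ19 {T : Finset (X × Y × Z)} {R : Rule (Sp19 X Y Z)} :
    R ∈ Γ19 T ↔ ∃ t, t ∈ T ∧ ((r19r t, r19p) : Rule (Sp19 X Y Z)) = R := by
  classical
  constructor
  · intro h
    have h' : R ∈ ((fun t => ((r19r t, r19p) : Rule (Sp19 X Y Z))) '' ↑T) := by
      rw [← Finset.coe_image]; exact h
    obtain ⟨t, ht, he⟩ := h'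
    exact ⟨t, ht, he⟩
  · rintro ⟨t, ht, rfl⟩
    have h' : ((r19r t, r19p) : Rule (Sp19 X Y Z))
        ∈ ((fun t => ((r19r t, r19p) : Rule (Sp19 X Y Z))) '' ↑T) := ⟨t, ht, rfl⟩
    rw [← Finset.coe_image] at h'
    exact h'

lemma step19 (T S : Finset (X × Y × Z)) (t : X × Y × Z) (htT : t ∈ T)
    (hS : ∀ s ∈ S, s.1 ≠ t.1 ∧ s.2.1 ≠ t.2.1 ∧ s.2.2 ≠ t.2.2) :
    Step (↑(Γ19 T) : Set (Rule (Sp19 X Y Z))) (cov19 S) (cov19 (insert t S)) := by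
  classical
  have htS : t ∉ S := fun h => (hS t h).1 rfl
  refine ⟨(r19r t, r19p), ?_, ?_, ?_⟩
  · exact Finset.mem_coe.2 (mem_Γ19.2 ⟨t, htT, rfl⟩)
  · intro i
    rcases i with (x | y | z) | u
    · show (if x = t.1 then 1 else 0) ≤ cov19 S (Sum.inl (Sum.inl x))
      split
      · next h =>
        subst h
        show 1 ≤ cov19 S (Sum.inl (Sum.inl t.1))
        show 1 ≤ if ∃ s ∈ S, s.1 = t.1 then 0 else 1
        rw [if_neg]
        rintro ⟨s, hs, h⟩
        exact (hS s hs).1 h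
      · exact Nat.zero_le _
    · show (if y = t.2.1 then 1 else 0) ≤ cov19 S (Sum.inl (Sum.inr (Sum.inl y)))
      split
      · next h =>
        subst h
        show 1 ≤ if ∃ s ∈ S, s.2.1 = t.2.1 then 0 else 1
        rw [if_neg]
        rintro ⟨s, hs, h⟩
        exact (hS s hs).2.1 h
      · exact Nat.zero_le _
    · show (if z = t.2.2 then 1 else 0) ≤ cov19 S (Sum.inl (Sum.inr (Sum.inr z)))
      split
      · next h =>
        subst h
        show 1 ≤ if ∃ s ∈ S, s.2.2 = t.2.2 then 0 else 1
        rw [if_neg]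
        rintro ⟨s, hs, h⟩
        exact (hS s hs).2.2 h
      · exact Nat.zero_le _
    · exact Nat.zero_le _
  · funext i
    rcases i with (x | y | z) | u
    · show (if ∃ s ∈ insert t S, s.1 = x then 0 else 1)
        = cov19 S (Sum.inl (Sum.inl x)) + 0 - (if x = t.1 then 1 else 0)
      by_cases hx : x = t.1
      · have h1 : ∃ s ∈ insert t S, s.1 = x := ⟨t, Finset.mem_insert_self _ _, hx.symm⟩
        have h2 : ¬ ∃ s ∈ S, s.1 = x := by
          rintro ⟨s, hs, h⟩; exact (hS s hs).1 (h.trans hx)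
        show (if ∃ s ∈ insert t S, s.1 = x then 0 else 1)
          = (if ∃ s ∈ S, s.1 = x then 0 else 1) + 0 - (if x = t.1 then 1 else 0)
        rw [if_pos h1, if_neg h2, if_pos hx]
      · have h3 : (∃ s ∈ insert t S, s.1 = x) ↔ (∃ s ∈ S, s.1 = x) := by
          constructor
          · rintro ⟨s, hs, h⟩
            rcases Finset.mem_insert.1 hs with rfl | hs'
            · exact absurd h.symm hx
            · exact ⟨s, hs', h⟩
          · rintro ⟨s, hs, h⟩; exact ⟨s, Finset.mem_insert_of_mem hs, h⟩
        show (if ∃ s ∈ insert t S, s.1 = x then 0 else 1)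
          = (if ∃ s ∈ S, s.1 = x then 0 else 1) + 0 - (if x = t.1 then 1 else 0)
        rw [if_neg hx, if_congr h3 rfl rfl]
        simp
    · show (if ∃ s ∈ insert t S, s.2.1 = y then 0 else 1)
        = cov19 S (Sum.inl (Sum.inr (Sum.inl y))) + 0 - (if y = t.2.1 then 1 else 0)
      by_cases hy : y = t.2.1
      · have h1 : ∃ s ∈ insert t S, s.2.1 = y := ⟨t, Finset.mem_insert_self _ _, hy.symm⟩
        have h2 : ¬ ∃ s ∈ S, s.2.1 = y := by
          rintro ⟨s, hs, h⟩; exact (hS s hs).2.1 (h.trans hy)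
        show (if ∃ s ∈ insert t S, s.2.1 = y then 0 else 1)
          = (if ∃ s ∈ S, s.2.1 = y then 0 else 1) + 0 - (if y = t.2.1 then 1 else 0)
        rw [if_pos h1, if_neg h2, if_pos hy]
      · have h3 : (∃ s ∈ insert t S, s.2.1 = y) ↔ (∃ s ∈ S, s.2.1 = y) := by
          constructor
          · rintro ⟨s, hs, h⟩
            rcases Finset.mem_insert.1 hs with rfl | hs'
            · exact absurd h.symm hy
            · exact ⟨s, hs', h⟩
          · rintro ⟨s, hs, h⟩; exact ⟨s, Finset.mem_insert_of_mem hs, h⟩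
        show (if ∃ s ∈ insert t S, s.2.1 = y then 0 else 1)
          = (if ∃ s ∈ S, s.2.1 = y then 0 else 1) + 0 - (if y = t.2.1 then 1 else 0)
        rw [if_neg hy, if_congr h3 rfl rfl]
        simp
    · show (if ∃ s ∈ insert t S, s.2.2 = z then 0 else 1)
        = cov19 S (Sum.inl (Sum.inr (Sum.inr z))) + 0 - (if z = t.2.2 then 1 else 0)
      by_cases hz : z = t.2.2
      · have h1 : ∃ s ∈ insert t S, s.2.2 = z := ⟨t, Finset.mem_insert_self _ _, hz.symm⟩
        have h2 : ¬ ∃ s ∈ S, s.2.2 = z := by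
          rintro ⟨s, hs, h⟩; exact (hS s hs).2.2 (h.trans hz)
        show (if ∃ s ∈ insert t S, s.2.2 = z then 0 else 1)
          = (if ∃ s ∈ S, s.2.2 = z then 0 else 1) + 0 - (if z = t.2.2 then 1 else 0)
        rw [if_pos h1, if_neg h2, if_pos hz]
      · have h3 : (∃ s ∈ insert t S, s.2.2 = z) ↔ (∃ s ∈ S, s.2.2 = z) := by
          constructor
          · rintro ⟨s, hs, h⟩
            rcases Finset.mem_insert.1 hs with rfl | hs'
            · exact absurd h.symm hz
            · exact ⟨s, hs', h⟩
          · rintro ⟨s, hs, h⟩; exact ⟨s, Finset.mem_insert_of_mem hs, h⟩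
        show (if ∃ s ∈ insert t S, s.2.2 = z then 0 else 1)
          = (if ∃ s ∈ S, s.2.2 = z then 0 else 1) + 0 - (if z = t.2.2 then 1 else 0)
        rw [if_neg hz, if_congr h3 rfl rfl]
        simp
    · show ((insert t S).card : ℕ) = cov19 S (Sum.inr u) + 1 - 0
      show ((insert t S).card : ℕ) = S.card + 1 - 0
      rw [Finset.card_insert_of_notMem htS]
      omega

lemma reach19 (T M : Finset (X × Y × Z)) (hMT : M ⊆ T)
    (hx : ∀ s ∈ M, ∀ t ∈ M, s.1 = t.1 → s = t)
    (hy : ∀ s ∈ M, ∀ t ∈ M, s.2.1 = t.2.1 → s = t)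
    (hz : ∀ s ∈ M, ∀ t ∈ M, s.2.2 = t.2.2 → s = t) :
    ∀ k (S : Finset (X × Y × Z)), S ⊆ M → (M \ S).card = k →
      Reachable (↑(Γ19 T) : Set (Rule (Sp19 X Y Z))) (cov19 S) (cov19 M) := by
  intro k
  induction k with
  | zero =>
    intro S hSM h0
    have hMS : M ⊆ S := by
      intro t ht
      by_contra htS
      have hmem : t ∈ M \ S := Finset.mem_sdiff.2 ⟨ht, htS⟩
      rw [Finset.card_eq_zero.1 h0] at hmem
      exact absurd hmem (Finset.notMem_empty t)
    rw [Finset.Subset.antisymm hSM hMS]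
    exact Relation.ReflTransGen.refl
  | succ n ih =>
    intro S hSM hc
    have hne : (M \ S).Nonempty := by
      rw [← Finset.card_pos, hc]; omega
    obtain ⟨t, ht⟩ := hne
    obtain ⟨htM, htS⟩ := Finset.mem_sdiff.1 ht
    have hstep : Step (↑(Γ19 T) : Set (Rule (Sp19 X Y Z))) (cov19 S) (cov19 (insert t S)) := by
      apply step19 T S t (hMT htM)
      intro s hs
      refine ⟨fun h => htS ?_, fun h => htS ?_, fun h => htS ?_⟩
      · exact (hx s (hSM hs) t htM h) ▸ hs
      · exact (hy s (hSM hs) t htM h) ▸ hs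
      · exact (hz s (hSM hs) t htM h) ▸ hs
    refine Relation.ReflTransGen.head hstep (ih (insert t S) ?_ ?_)
    · exact Finset.insert_subset htM hSM
    · rw [Finset.sdiff_insert, Finset.card_erase_of_mem ht, hc]
      omega

lemma inv19 (T : Finset (X × Y × Z)) {C C' : Config (Sp19 X Y Z)}
    (h : Reachable (↑(Γ19 T) : Set (Rule (Sp19 X Y Z))) C C') :
    ∃ m : Multiset (X × Y × Z), (∀ t ∈ m, t ∈ T) ∧
      ∀ i, C' i + (m.map (fun t => r19r t i)).sum
        = C i + (m.map (fun _ => r19p i)).sum := by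
  induction h with
  | refl => exact ⟨0, by simp, by simp⟩
  | @tail b c hsteps hstep ih =>
    obtain ⟨m, hmT, hm⟩ := ih
    obtain ⟨R, hR, hApp, rfl⟩ := hstep
    obtain ⟨t, htT, rfl⟩ := mem_Γ19.1 (Finset.mem_coe.1 hR)
    refine ⟨t ::ₘ m, ?_, ?_⟩
    · intro s hs
      rcases Multiset.mem_cons.1 hs with rfl | hs'
      · exact htT
      · exact hmT s hs'
    · intro i
      have h1 := hm i
      have h2 : r19r t i ≤ b i := hApp i
      have h3 : applyRule (r19r t, r19p) b i = b i + r19p i - r19r t i := rfl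
      rw [Multiset.map_cons, Multiset.sum_cons, Multiset.map_cons, Multiset.sum_cons, h3]
      omega

lemma sum_ite19 {α : Type*} (m : Multiset α) (p : α → Prop) [DecidablePred p] :
    (m.map (fun t => if p t then 1 else 0)).sum = Multiset.countP p m := by
  induction m using Multiset.induction with
  | empty => simp
  | cons a s ih =>
    rw [Multiset.map_cons, Multiset.sum_cons, Multiset.countP_cons, ih]
    split <;> omega

end Helpers19

/-- for a 3DM instance `(X, Y, Z, T)` with `|X| = |Y| = |Z| = n`, the
target configuration (`n` copies of `a`, nothing else) is reachable from the initial
configuration (one copy of each `S_v`) under the rules `S_x + S_y + S_z → a`, `t ∈ T`,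
iff the instance has a perfect matching; moreover this CRN is feed-forward and contains
no void rules and no autogenesis rules. -/
theorem stmt19 {X Y Z : Type*} [Fintype X] [Fintype Y] [Fintype Z]
    [DecidableEq X] [DecidableEq Y] [DecidableEq Z]
    (hXY : Fintype.card X = Fintype.card Y) (hYZ : Fintype.card Y = Fintype.card Z)
    (T : Finset (X × Y × Z)) :
    (Reachable (↑(Γ19 T) : Set (Rule (Sp19 X Y Z))) I19 (D19 (Fintype.card X)) ↔
      ∃ M : Finset (X × Y × Z), M ⊆ T ∧
        (∀ x : X, ∃! t, t ∈ M ∧ t.1 = x) ∧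
        (∀ y : Y, ∃! t, t ∈ M ∧ t.2.1 = y) ∧
        (∀ z : Z, ∃! t, t ∈ M ∧ t.2.2 = z)) ∧
    FeedForward (Γ19 T) ∧
    (∀ R ∈ Γ19 T, ¬ (∀ i, R.2 i ≤ R.1 i)) ∧
    (∀ R ∈ Γ19 T, ¬ (∀ i, R.1 i ≤ R.2 i)) := by
  classical
  refine ⟨?_, ?_, ?_, ?_⟩
  · constructor
    · -- reachability implies matching
      intro h
      obtain ⟨m, hmT, hm⟩ := inv19 T h
      refine ⟨m.toFinset, ?_, ?_, ?_, ?_⟩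
      · intro t ht; exact hmT t (Multiset.mem_toFinset.1 ht)
      · intro x
        have h1 := hm (Sum.inl (Sum.inl x))
        have h2 : (m.map (fun t => if x = t.1 then 1 else 0)).sum = 1 := by
          simpa [D19, I19, r19r, r19p] using h1
        rw [sum_ite19, Multiset.countP_eq_card_filter] at h2
        obtain ⟨t0, ht0⟩ := Multiset.card_eq_one.1 h2
        have ht0mem : t0 ∈ Multiset.filter (fun t => x = t.1) m := by rw [ht0]; simp
        rw [Multiset.mem_filter] at ht0mem
        refine ⟨t0, ⟨Multiset.mem_toFinset.2 ht0mem.1, ht0mem.2.symm⟩, ?_⟩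
        rintro s ⟨hsM, hs1⟩
        have hsf : s ∈ Multiset.filter (fun t => x = t.1) m :=
          Multiset.mem_filter.2 ⟨Multiset.mem_toFinset.1 hsM, hs1.symm⟩
        rw [ht0] at hsf
        exact Multiset.mem_singleton.1 hsf
      · intro y
        have h1 := hm (Sum.inl (Sum.inr (Sum.inl y)))
        have h2 : (m.map (fun t => if y = t.2.1 then 1 else 0)).sum = 1 := by
          simpa [D19, I19, r19r, r19p] using h1
        rw [sum_ite19, Multiset.countP_eq_card_filter] at h2
        obtain ⟨t0, ht0⟩ := Multiset.card_eq_one.1 h2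
        have ht0mem : t0 ∈ Multiset.filter (fun t => y = t.2.1) m := by rw [ht0]; simp
        rw [Multiset.mem_filter] at ht0mem
        refine ⟨t0, ⟨Multiset.mem_toFinset.2 ht0mem.1, ht0mem.2.symm⟩, ?_⟩
        rintro s ⟨hsM, hs1⟩
        have hsf : s ∈ Multiset.filter (fun t => y = t.2.1) m :=
          Multiset.mem_filter.2 ⟨Multiset.mem_toFinset.1 hsM, hs1.symm⟩
        rw [ht0] at hsf
        exact Multiset.mem_singleton.1 hsf
      · intro z
        have h1 := hm (Sum.inl (Sum.inr (Sum.inr z)))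
        have h2 : (m.map (fun t => if z = t.2.2 then 1 else 0)).sum = 1 := by
          simpa [D19, I19, r19r, r19p] using h1
        rw [sum_ite19, Multiset.countP_eq_card_filter] at h2
        obtain ⟨t0, ht0⟩ := Multiset.card_eq_one.1 h2
        have ht0mem : t0 ∈ Multiset.filter (fun t => z = t.2.2) m := by rw [ht0]; simp
        rw [Multiset.mem_filter] at ht0mem
        refine ⟨t0, ⟨Multiset.mem_toFinset.2 ht0mem.1, ht0mem.2.symm⟩, ?_⟩
        rintro s ⟨hsM, hs1⟩
        have hsf : s ∈ Multiset.filter (fun t => z = t.2.2) m :=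
          Multiset.mem_filter.2 ⟨Multiset.mem_toFinset.1 hsM, hs1.symm⟩
        rw [ht0] at hsf
        exact Multiset.mem_singleton.1 hsf
    · -- matching implies reachability
      rintro ⟨M, hMT, hux, huy, huz⟩
      have hx : ∀ s ∈ M, ∀ t ∈ M, s.1 = t.1 → s = t := by
        intro s hs t ht h
        obtain ⟨u, -, hu⟩ := hux t.1
        rw [hu s ⟨hs, h⟩, hu t ⟨ht, rfl⟩]
      have hy : ∀ s ∈ M, ∀ t ∈ M, s.2.1 = t.2.1 → s = t := by
        intro s hs t ht h
        obtain ⟨u, -, hu⟩ := huy t.2.1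
        rw [hu s ⟨hs, h⟩, hu t ⟨ht, rfl⟩]
      have hz : ∀ s ∈ M, ∀ t ∈ M, s.2.2 = t.2.2 → s = t := by
        intro s hs t ht h
        obtain ⟨u, -, hu⟩ := huz t.2.2
        rw [hu s ⟨hs, h⟩, hu t ⟨ht, rfl⟩]
      have hcard : M.card = Fintype.card X := by
        rw [← Finset.card_univ]
        apply Finset.card_bij (fun t _ => t.1)
        · intro a _; exact Finset.mem_univ _
        · intro a ha b hb hab; exact hx a ha b hb hab
        · intro x _
          obtain ⟨t, ⟨htM, ht1⟩, -⟩ := hux x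
          exact ⟨t, htM, ht1⟩
      have hD : cov19 M = D19 (Fintype.card X) := by
        funext i
        rcases i with (x | y | z) | u
        · show (if ∃ t ∈ M, t.1 = x then 0 else 1) = 0
          rw [if_pos]
          obtain ⟨t, ⟨htM, ht1⟩, -⟩ := hux x
          exact ⟨t, htM, ht1⟩
        · show (if ∃ t ∈ M, t.2.1 = y then 0 else 1) = 0
          rw [if_pos]
          obtain ⟨t, ⟨htM, ht1⟩, -⟩ := huy y
          exact ⟨t, htM, ht1⟩
        · show (if ∃ t ∈ M, t.2.2 = z then 0 else 1) = 0
          rw [if_pos]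
          obtain ⟨t, ⟨htM, ht1⟩, -⟩ := huz z
          exact ⟨t, htM, ht1⟩
        · exact hcard
      rw [← cov19_empty, ← hD]
      exact reach19 T M hMT hx hy hz (M \ ∅).card ∅ (Finset.empty_subset M) rfl
  · -- feed-forward
    refine ⟨(Γ19 T).toList, Finset.nodup_toList _, fun R => Finset.mem_toList, ?_⟩
    apply List.pairwise_of_forall_mem_list
    intro Re hRe Rl hRl i hpos
    obtain ⟨te, -, rfl⟩ := mem_Γ19.1 (Finset.mem_toList.1 hRe)
    obtain ⟨tl, -, rfl⟩ := mem_Γ19.1 (Finset.mem_toList.1 hRl)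
    rcases i with (x | y | z) | u
    · exact absurd hpos (by simp [r19p])
    · exact absurd hpos (by simp [r19p])
    · exact absurd hpos (by simp [r19p])
    · rfl
  · -- no void rules
    intro R hR
    obtain ⟨t, -, rfl⟩ := mem_Γ19.1 hR
    intro h
    have := h (Sum.inr ())
    simp [r19r, r19p] at this
  · -- no autogenesis rules
    intro R hR
    obtain ⟨t, -, rfl⟩ := mem_Γ19.1 hR
    intro h
    have := h (Sum.inl (Sum.inl t.1))
    simp [r19r, r19p] at this
end
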